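/- If Δ is 2-CLeray (i.e., H̃_{c-1}(lk_Δ S) = 0 for all S with |S| ≥ 1, where c-1 ≥ 0 is the frame dimension of Δ), then for every vertex x of Δ, the frame dimension of lk_Δ{x} is exactly c - 2 (i.e., its frame parameter is c-1). -/

import Mathlib

open Finset

namespace SCx

variable (k : Type) [Field k] {n : ℕ}

/-- An (abstract) simplicial complex on the vertex set `Fin n`:
a set of finsets closed under taking subsets. -/
def IsComplex (Δ : Set (Finset (Fin n))) : Prop :=
  ∀ F ∈ Δ, ∀ G ⊆ F, G ∈ Δ

/-- Simplicial `p`-chains with coefficients in `k`: functions on the faces of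
cardinality `p+1`. -/
abbrev Chains (Δ : Set (Finset (Fin n))) (p : ℤ) : Type :=
  {F : Finset (Fin n) // F ∈ Δ ∧ (F.card : ℤ) = p + 1} → k

open Classical in
/-- The underlying function of the simplicial boundary map, written via its
transpose formula:
`(∂ f) G = ∑_{x : insert x G ∈ Δ} (-1)^{pos of x in insert x G} f (insert x G)`. -/
noncomputable def boundaryFun (Δ : Set (Finset (Fin n))) (p : ℤ)
    (f : Chains k Δ p) : Chains k Δ (p - 1) := fun G => ∑ x : Fin n,
  if h : x ∉ G.1 ∧ insert x G.1 ∈ Δ then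
    (-1 : k) ^ (G.1.filter (fun y => y < x)).card *
      f ⟨insert x G.1, h.2, by
        have hc := G.2.2
        rw [Finset.card_insert_of_notMem h.1]
        push_cast at hc ⊢
        omega⟩
  else 0

/-- The simplicial boundary map. -/
noncomputable def boundary (Δ : Set (Finset (Fin n))) (p : ℤ) :
    Chains k Δ p →ₗ[k] Chains k Δ (p - 1) where
  toFun := boundaryFun k Δ p
  map_add' f g := by
    funext G
    unfold boundaryFun
    rw [Pi.add_apply]
    rw [← Finset.sum_add_distrib]
    refine Finset.sum_congr rfl fun x _ => ?_
    split_ifs with h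
    · rw [Pi.add_apply]; ring
    · rw [add_zero]
  map_smul' c f := by
    funext G
    unfold boundaryFun
    simp only [RingHom.id_apply, Pi.smul_apply, smul_eq_mul, Finset.mul_sum]
    refine Finset.sum_congr rfl fun x _ => ?_
    split_ifs with h
    · ring
    · rw [mul_zero]

/-- Transport of chains along an equality of degrees. -/
noncomputable def chainsCongr (Δ : Set (Finset (Fin n))) {p q : ℤ} (h : p = q) :
    Chains k Δ p ≃ₗ[k] Chains k Δ q := by
  subst h; exact LinearEquiv.refl k _

noncomputable def cycles (Δ : Set (Finset (Fin n))) (p : ℤ) : Submodule k (Chains k Δ p) :=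
  LinearMap.ker (boundary k Δ p)

noncomputable def boundaries (Δ : Set (Finset (Fin n))) (p : ℤ) : Submodule k (Chains k Δ p) :=
  LinearMap.range ((chainsCongr k Δ (show p + 1 - 1 = p by ring)).toLinearMap ∘ₗ
    boundary k Δ (p + 1))

/-- Reduced simplicial homology of `Δ` in degree `p`, with coefficients in the field `k`,
defined as cycles modulo (boundaries intersected with cycles).  With this convention
`H̃_{-1}({∅}) = k`. -/
abbrev ReducedHomology (Δ : Set (Finset (Fin n))) (p : ℤ) :=
  ↥(cycles k Δ p) ⧸ (Submodule.comap (cycles k Δ p).subtype (boundaries k Δ p))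

/-- The Alexander dual of `Δ`. -/
def dual (Δ : Set (Finset (Fin n))) : Set (Finset (Fin n)) := {F | Fᶜ ∉ Δ}

/-- The restriction `Δ_R` of `Δ` to a vertex subset `R`. -/
def restrict (Δ : Set (Finset (Fin n))) (R : Finset (Fin n)) : Set (Finset (Fin n)) :=
  {F | F ∈ Δ ∧ F ⊆ R}

/-- The link `lk_Δ S`. -/
def link (Δ : Set (Finset (Fin n))) (S : Finset (Fin n)) : Set (Finset (Fin n)) :=
  {F | Disjoint F S ∧ F ∪ S ∈ Δ}

/-- `Δ_R^{S,T} = {F ⊆ R : F ∪ S ∈ Δ}` (for `T` the complement of `R ∪ S`). -/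
def sub (Δ : Set (Finset (Fin n))) (R S : Finset (Fin n)) : Set (Finset (Fin n)) :=
  {F | F ⊆ R ∧ F ∪ S ∈ Δ}

/-- `Δ` has dimension `d - 1`, i.e. `d` is the maximal cardinality of a face. -/
def IsDim (Δ : Set (Finset (Fin n))) (d : ℕ) : Prop :=
  (∀ F ∈ Δ, F.card ≤ d) ∧ ∃ F ∈ Δ, F.card = d

/-- `Δ` has frame dimension `c - 1`, i.e. `c` is the largest integer such that
every `c`-subset of `[n]` is a face of `Δ`. -/
def IsFrame (Δ : Set (Finset (Fin n))) (c : ℕ) : Prop :=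
  (∀ F : Finset (Fin n), F.card ≤ c → F ∈ Δ) ∧
    ∃ F : Finset (Fin n), F.card = c + 1 ∧ F ∉ Δ

/-- A facet: a maximal face. -/
def IsFacet (Δ : Set (Finset (Fin n))) (F : Finset (Fin n)) : Prop :=
  F ∈ Δ ∧ ∀ G ∈ Δ, F ⊆ G → F = G

/-! ### Auxiliary material for Statement 15 -/

section Aux

variable {k}

/-- Deletion of a vertex. -/
def del (Γ : Set (Finset (Fin n))) (y : Fin n) : Set (Finset (Fin n)) :=
  {F | F ∈ Γ ∧ y ∉ F}

lemma mem_del {Γ : Set (Finset (Fin n))} {y : Fin n} {F : Finset (Fin n)} :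
    F ∈ del Γ y ↔ F ∈ Γ ∧ y ∉ F := Iff.rfl

lemma mem_link {Γ : Set (Finset (Fin n))} {S F : Finset (Fin n)} :
    F ∈ link Γ S ↔ Disjoint F S ∧ F ∪ S ∈ Γ := Iff.rfl

lemma union_singleton_eq {F : Finset (Fin n)} {y : Fin n} :
    F ∪ {y} = insert y F := by
  rw [Finset.union_comm, ← Finset.insert_eq]

lemma link_empty (Γ : Set (Finset (Fin n))) : link Γ ∅ = Γ := by
  ext F; simp [link]

lemma link_link (Γ : Set (Finset (Fin n))) {S S' : Finset (Fin n)} (h : Disjoint S' S) :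
    link (link Γ S) S' = link Γ (S ∪ S') := by
  ext F
  simp only [mem_link]
  constructor
  · rintro ⟨h1, h2, h3⟩
    refine ⟨?_, ?_⟩
    · rw [Finset.disjoint_union_right]
      exact ⟨Finset.disjoint_of_subset_left Finset.subset_union_left h2, h1⟩
    · rw [show F ∪ (S ∪ S') = F ∪ S' ∪ S by
        rw [Finset.union_assoc, Finset.union_comm S S']]
      exact h3
  · rintro ⟨h1, h2⟩
    rw [Finset.disjoint_union_right] at h1
    refine ⟨h1.2, ?_, ?_⟩
    · rw [Finset.disjoint_union_left]
      exact ⟨h1.1, h⟩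
    · rw [show F ∪ S' ∪ S = F ∪ (S ∪ S') by rw [Finset.union_assoc, Finset.union_comm S' S]]
      exact h2

lemma isComplex_link {Γ : Set (Finset (Fin n))} (hΓ : IsComplex Γ)
    (S : Finset (Fin n)) : IsComplex (link Γ S) := by
  rintro F ⟨h1, h2⟩ G hG
  exact ⟨Finset.disjoint_of_subset_left hG h1,
    hΓ _ h2 _ (Finset.union_subset_union_left hG)⟩

lemma isComplex_del {Γ : Set (Finset (Fin n))} (hΓ : IsComplex Γ)
    (y : Fin n) : IsComplex (del Γ y) := by
  rintro F ⟨h1, h2⟩ G hG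
  exact ⟨hΓ _ h1 _ hG, fun hy => h2 (hG hy)⟩

lemma link_del {Γ : Set (Finset (Fin n))} {y : Fin n} {S : Finset (Fin n)} (hy : y ∉ S) :
    link (del Γ y) S = del (link Γ S) y := by
  ext F
  simp only [mem_link, mem_del, Finset.mem_union]
  constructor
  · rintro ⟨h1, h2, h3⟩
    exact ⟨⟨h1, h2⟩, fun hyF => h3 (Or.inl hyF)⟩
  · rintro ⟨⟨h1, h2⟩, h3⟩
    exact ⟨h1, h2, fun h => h.elim h3 hy⟩

/-- Evaluation of `chainsCongr`. -/
lemma chainsCongr_apply (Δ : Set (Finset (Fin n))) {p q : ℤ} (h : p = q)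
    (f : Chains k Δ p) (G : {F : Finset (Fin n) // F ∈ Δ ∧ (F.card : ℤ) = q + 1}) :
    (chainsCongr k Δ h) f G = f ⟨G.1, G.2.1, by rw [h]; exact G.2.2⟩ := by
  subst h; rfl

lemma mem_cycles_iff {Δ : Set (Finset (Fin n))} {p : ℤ} {z : Chains k Δ p} :
    z ∈ cycles k Δ p ↔
      ∀ G : {F : Finset (Fin n) // F ∈ Δ ∧ (F.card : ℤ) = p - 1 + 1},
        boundaryFun k Δ p z G = 0 := by
  rw [cycles, LinearMap.mem_ker]
  constructor
  · intro h G
    have := congrFun h G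
    exact this
  · intro h
    funext G
    exact h G

lemma mem_boundaries_iff {Δ : Set (Finset (Fin n))} {p : ℤ} {z : Chains k Δ p} :
    z ∈ boundaries k Δ p ↔
      ∃ w : Chains k Δ (p + 1),
        ∀ (G : Finset (Fin n)) (hG : G ∈ Δ ∧ (G.card : ℤ) = p + 1),
          boundaryFun k Δ (p + 1) w ⟨G, hG.1, by omega⟩ = z ⟨G, hG⟩ := by
  rw [boundaries, LinearMap.mem_range]
  constructor
  · rintro ⟨w, hw⟩
    refine ⟨w, fun G hG => ?_⟩
    have := congrFun hw ⟨G, hG⟩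
    rw [LinearMap.comp_apply] at this
    rw [← this]
    rw [LinearEquiv.coe_coe, chainsCongr_apply]
    rfl
  · rintro ⟨w, hw⟩
    refine ⟨w, ?_⟩
    funext G
    rw [LinearMap.comp_apply, LinearEquiv.coe_coe, chainsCongr_apply]
    exact hw G.1 ⟨G.2.1, G.2.2⟩

variable (k) in
/-- The vanishing condition we propagate: all `(c-1)`-cycles are boundaries. -/
def Vanish (Γ : Set (Finset (Fin n))) (c : ℕ) : Prop :=
  cycles k Γ ((c : ℤ) - 1) ≤ boundaries k Γ ((c : ℤ) - 1)

variable (k) in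
/-- Hereditary vanishing: all links (including the empty link) vanish. -/
def HV (Γ : Set (Finset (Fin n))) (c : ℕ) : Prop :=
  ∀ S : Finset (Fin n), Vanish k (link Γ S) c

lemma vanish_of_subsingleton {Γ : Set (Finset (Fin n))} {c : ℕ}
    (h : Subsingleton (ReducedHomology k Γ ((c : ℤ) - 1))) : Vanish k Γ c := by
  intro z hz
  have h1 : (Submodule.Quotient.mk (⟨z, hz⟩ : cycles k Γ ((c : ℤ) - 1)) :
      ReducedHomology k Γ ((c : ℤ) - 1)) = Submodule.Quotient.mk 0 := Subsingleton.elim _ _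
  rw [Submodule.Quotient.eq] at h1
  simpa using h1

lemma vanish_of_no_faces {Γ : Set (Finset (Fin n))} {c : ℕ}
    (h : ∀ F : Finset (Fin n), F ∉ Γ) : Vanish k Γ c := by
  intro z _
  rw [mem_boundaries_iff]
  exact ⟨0, fun G hG => absurd hG.1 (h G)⟩

open Classical in
/-- Base case: a complex supported inside a `(c+1)`-set `T`, containing the whole
boundary of `T`, with vanishing `(c-1)`-st homology, must contain `T`. -/
lemma lemA {Γ : Set (Finset (Fin n))} {c : ℕ} (hc1 : 1 ≤ c)
    {T : Finset (Fin n)} (hT : T.card = c + 1)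
    (hskel : ∀ F ⊆ T, F.card ≤ c → F ∈ Γ)
    (hsub : ∀ F ∈ Γ, F ⊆ T)
    (hv : Vanish k Γ c) : T ∈ Γ := by
  by_contra hTn
  set sgn : Fin n → k := fun t => (-1 : k) ^ (T.filter (fun s => s < t)).card with hsgn
  set z : Chains k Γ ((c : ℤ) - 1) := fun F => ∑ t ∈ T \ F.1, sgn t with hzdef
  have hzc : z ∈ cycles k Γ ((c : ℤ) - 1) := by
    rw [mem_cycles_iff]
    rintro ⟨G, hGΓ, hGcard⟩
    have hGc : G.card = c - 1 := by omega
    have hGT : G ⊆ T := hsub G hGΓ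
    have hTGcard : (T \ G).card = 2 := by
      rw [Finset.card_sdiff_of_subset hGT]; omega
    have hcond : ∀ x : Fin n, (x ∉ G ∧ insert x G ∈ Γ) ↔ x ∈ T \ G := by
      intro x
      constructor
      · rintro ⟨h1, h2⟩
        exact Finset.mem_sdiff.mpr ⟨(hsub _ h2) (Finset.mem_insert_self x G), h1⟩
      · intro hx
        rw [Finset.mem_sdiff] at hx
        refine ⟨hx.2, hskel _ (Finset.insert_subset hx.1 hGT) ?_⟩
        rw [Finset.card_insert_of_notMem hx.2]; omega
    unfold boundaryFun
    have step1 : (∑ x : Fin n,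
        if h : x ∉ G ∧ insert x G ∈ Γ then
          (-1 : k) ^ (G.filter (fun y => y < x)).card *
            z ⟨insert x G, h.2, by
              rw [Finset.card_insert_of_notMem h.1]; push_cast; omega⟩
        else 0) =
        ∑ x ∈ T \ G, (-1 : k) ^ (G.filter (fun y => y < x)).card *
          ∑ t ∈ T \ insert x G, sgn t := by
      have e0 : (∑ x : Fin n,
          if h : x ∉ G ∧ insert x G ∈ Γ then
            (-1 : k) ^ (G.filter (fun y => y < x)).card *
              z ⟨insert x G, h.2, by
                rw [Finset.card_insert_of_notMem h.1]; push_cast; omega⟩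
          else 0) =
          ∑ x : Fin n, if x ∈ T \ G then
            (-1 : k) ^ (G.filter (fun y => y < x)).card *
              ∑ t ∈ T \ insert x G, sgn t else 0 := by
        refine Finset.sum_congr rfl fun x _ => ?_
        by_cases h : x ∉ G ∧ insert x G ∈ Γ
        · rw [dif_pos h, if_pos ((hcond x).mp h)]
        · rw [dif_neg h, if_neg (fun hm => h ((hcond x).mpr hm))]
      rw [e0, Finset.sum_ite_mem, Finset.univ_inter]
    rw [step1]
    obtain ⟨t₁, t₂, hne, hpair⟩ := Finset.card_eq_two.mp hTGcard
    have hmem : ∀ t, t ∈ T ∧ t ∉ G ↔ (t = t₁ ∨ t = t₂) := by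
      intro t
      rw [← Finset.mem_sdiff, hpair]; simp
    have h1T : t₁ ∈ T ∧ t₁ ∉ G := (hmem t₁).mpr (Or.inl rfl)
    have h2T : t₂ ∈ T ∧ t₂ ∉ G := (hmem t₂).mpr (Or.inr rfl)
    have hsd1 : T \ insert t₁ G = {t₂} := by
      ext t
      simp only [Finset.mem_sdiff, Finset.mem_insert, Finset.mem_singleton, not_or]
      constructor
      · rintro ⟨hT', hne1, hG'⟩
        rcases (hmem t).mp ⟨hT', hG'⟩ with rfl | rfl
        · exact absurd rfl hne1
        · rfl
      · rintro rfl
        exact ⟨h2T.1, hne.symm, h2T.2⟩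
    have hsd2 : T \ insert t₂ G = {t₁} := by
      ext t
      simp only [Finset.mem_sdiff, Finset.mem_insert, Finset.mem_singleton, not_or]
      constructor
      · rintro ⟨hT', hne2, hG'⟩
        rcases (hmem t).mp ⟨hT', hG'⟩ with rfl | rfl
        · rfl
        · exact absurd rfl hne2
      · rintro rfl
        exact ⟨h1T.1, hne, h1T.2⟩
    have main : ∀ a b : Fin n, a < b → T \ G = {a, b} →
        (-1 : k) ^ (G.filter (fun y => y < a)).card * sgn b +
        (-1 : k) ^ (G.filter (fun y => y < b)).card * sgn a = 0 := by
      intro a b hab hTG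
      have hdisj : Disjoint ({a, b} : Finset (Fin n)) G := by
        rw [← hTG]; exact Finset.sdiff_disjoint
      have hTeq : T = {a, b} ∪ G := by
        rw [← hTG, Finset.sdiff_union_of_subset hGT]
      have hfa : T.filter (fun s => s < a) = G.filter (fun s => s < a) := by
        rw [hTeq, Finset.filter_union]
        have : ({a, b} : Finset (Fin n)).filter (fun s => s < a) = ∅ := by
          rw [Finset.filter_insert, if_neg (lt_irrefl a), Finset.filter_singleton,
            if_neg (asymm hab)]
        rw [this, Finset.empty_union]
      have hfb : (T.filter (fun s => s < b)).card = (G.filter (fun s => s < b)).card + 1 := by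
        rw [hTeq, Finset.filter_union]
        have h1 : ({a, b} : Finset (Fin n)).filter (fun s => s < b) = {a} := by
          rw [Finset.filter_insert, if_pos hab, Finset.filter_singleton,
            if_neg (lt_irrefl b)]
          simp
        rw [h1, Finset.card_union_of_disjoint, Finset.card_singleton]
        · ring
        · refine Finset.disjoint_left.mpr fun t ht1 ht2 => ?_
          rw [Finset.mem_singleton] at ht1
          rw [ht1] at ht2
          have : a ∈ G := Finset.mem_of_mem_filter a ht2
          exact (Finset.disjoint_left.mp hdisj (Finset.mem_insert_self a {b})) this
      have e1 : sgn a = (-1 : k) ^ (G.filter (fun y => y < a)).card := by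
        show (-1 : k) ^ (T.filter (fun s => s < a)).card = _
        rw [hfa]
      have e2 : sgn b = -((-1 : k) ^ (G.filter (fun y => y < b)).card) := by
        show (-1 : k) ^ (T.filter (fun s => s < b)).card = _
        rw [hfb, pow_succ]; ring
      rw [e1, e2]; ring
    rw [hpair, Finset.sum_pair hne, hsd1, hsd2, Finset.sum_singleton, Finset.sum_singleton]
    rcases lt_or_gt_of_ne hne with hlt | hgt
    · exact main t₁ t₂ hlt hpair
    · have := main t₂ t₁ hgt (by rw [Finset.pair_comm] at hpair; exact hpair)
      rw [add_comm] at this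
      exact this
  obtain ⟨w, hw⟩ := mem_boundaries_iff.mp (hv hzc)
  have hTne : T.Nonempty := by rw [← Finset.card_pos]; omega
  obtain ⟨t₀, ht₀⟩ := hTne
  have hE : T.erase t₀ ∈ Γ := by
    refine hskel _ (Finset.erase_subset _ _) ?_
    rw [Finset.card_erase_of_mem ht₀]; omega
  have hEcard : ((T.erase t₀).card : ℤ) = ((c : ℤ) - 1) + 1 := by
    rw [Finset.card_erase_of_mem ht₀]; push_cast; omega
  have h1 := hw (T.erase t₀) ⟨hE, hEcard⟩
  have h2 : boundaryFun k Γ (((c : ℤ) - 1) + 1) w ⟨T.erase t₀, hE, by omega⟩ = 0 := by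
    unfold boundaryFun
    refine Finset.sum_eq_zero fun x _ => ?_
    rw [dif_neg]
    rintro ⟨hx1, hx2⟩
    have hsubx : insert x (T.erase t₀) ⊆ T := hsub _ hx2
    have hcx : (insert x (T.erase t₀)).card = c + 1 := by
      rw [Finset.card_insert_of_notMem hx1, Finset.card_erase_of_mem ht₀]; omega
    have : insert x (T.erase t₀) = T :=
      Finset.eq_of_subset_of_card_le hsubx (by omega)
    rw [this] at hx2
    exact hTn hx2
  rw [h2] at h1
  have h3 : z ⟨T.erase t₀, hE, hEcard⟩ = sgn t₀ := by
    rw [hzdef]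
    simp only
    rw [show T \ T.erase t₀ = {t₀} from ?_, Finset.sum_singleton]
    ext t
    simp only [Finset.mem_sdiff, Finset.mem_erase, Finset.mem_singleton]
    constructor
    · rintro ⟨ht, h⟩
      by_contra hne
      exact h ⟨hne, ht⟩
    · rintro rfl
      exact ⟨ht₀, fun h => h.1 rfl⟩
  rw [h3] at h1
  exact pow_ne_zero _ (neg_ne_zero.mpr one_ne_zero) h1.symm

open Classical in
/-- Extension by zero of a chain on `del Ξ y` to a chain on `Ξ`. -/
noncomputable def extend (Ξ : Set (Finset (Fin n))) (y : Fin n) (p : ℤ)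
    (z : Chains k (del Ξ y) p) : Chains k Ξ p :=
  fun F => if hF : y ∉ F.1 then z ⟨F.1, ⟨F.2.1, hF⟩, F.2.2⟩ else 0

lemma filter_lt_insert_card {G : Finset (Fin n)} {x : Fin n} (hx : x ∉ G) (t : Fin n) :
    ((insert x G).filter (fun s => s < t)).card
      = (G.filter (fun s => s < t)).card + (if x < t then 1 else 0) := by
  rw [Finset.filter_insert]
  split_ifs with h
  · rw [Finset.card_insert_of_notMem (fun hm => hx (Finset.mem_of_mem_filter x hm))]
  · rw [add_zero]

/-- The part of a chain of `Ξ` consisting of faces containing `y`, viewed in the link,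
with the appropriate sign. -/
noncomputable def coneDown (Ξ : Set (Finset (Fin n))) (y : Fin n) (p : ℤ)
    (w : Chains k Ξ (p + 1)) : Chains k (link Ξ {y}) p :=
  fun F => (-1 : k) ^ (F.1.filter (fun s => s < y)).card *
    w ⟨insert y F.1, by
        have hm : Disjoint F.1 {y} ∧ F.1 ∪ {y} ∈ Ξ := F.2.1
        have h2 := hm.2
        rwa [union_singleton_eq] at h2, by
        have hm : Disjoint F.1 {y} ∧ F.1 ∪ {y} ∈ Ξ := F.2.1
        have hyF : y ∉ F.1 := Finset.disjoint_singleton_right.mp hm.1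
        have hc := F.2.2
        rw [Finset.card_insert_of_notMem hyF]
        push_cast
        omega⟩

open Classical in
/-- The corrected chain on `del Ξ y`. -/
noncomputable def corr (Ξ : Set (Finset (Fin n))) (y : Fin n) (p : ℤ)
    (w : Chains k Ξ (p + 1)) (v : Chains k (link Ξ {y}) (p + 1)) :
    Chains k (del Ξ y) (p + 1) :=
  fun F => w ⟨F.1, (show F.1 ∈ Ξ ∧ y ∉ F.1 from F.2.1).1, F.2.2⟩ +
    if hF : F.1 ∈ link Ξ {y} then v ⟨F.1, hF, F.2.2⟩ else 0

open Classical in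
/-- Mayer–Vietoris style deletion lemma. -/
lemma lemL1 {c : ℕ} {Ξ : Set (Finset (Fin n))} (hΞ : IsComplex Ξ) (y : Fin n)
    (h0 : Vanish k Ξ c) (h1 : Vanish k (link Ξ {y}) c) : Vanish k (del Ξ y) c := by
  intro z hz
  rw [mem_cycles_iff] at hz
  have hztc : extend Ξ y ((c : ℤ) - 1) z ∈ cycles k Ξ ((c : ℤ) - 1) := by
    rw [mem_cycles_iff]
    rintro ⟨G, hGΞ, hGcard⟩
    unfold boundaryFun
    by_cases hyG : y ∈ G
    · refine Finset.sum_eq_zero fun x _ => ?_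
      split_ifs with h
      · have : extend Ξ y ((c : ℤ) - 1) z ⟨insert x G, h.2, by
            rw [Finset.card_insert_of_notMem h.1]; push_cast at hGcard ⊢; omega⟩ = 0 := by
          unfold extend
          exact dif_neg (not_not_intro (Finset.mem_insert_of_mem hyG))
        rw [this, mul_zero]
      · rfl
    · have hzG := hz ⟨G, ⟨hGΞ, hyG⟩, hGcard⟩
      unfold boundaryFun at hzG
      refine Eq.trans (Finset.sum_congr rfl fun x _ => ?_) hzG
      by_cases hxy : x = y
      · subst hxy
        have hR : ¬(x ∉ G ∧ insert x G ∈ del Ξ x) := by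
          rintro ⟨-, -, hcon⟩
          exact hcon (Finset.mem_insert_self x G)
        rw [dif_neg hR]
        split_ifs with h
        · have : extend Ξ x ((c : ℤ) - 1) z ⟨insert x G, h.2, by
              rw [Finset.card_insert_of_notMem h.1]; push_cast at hGcard ⊢; omega⟩ = 0 := by
            unfold extend
            exact dif_neg (not_not_intro (Finset.mem_insert_self x G))
          rw [this, mul_zero]
        · rfl
      · have hyx : y ∉ insert x G :=
          fun hm => (Finset.mem_insert.mp hm).elim (fun e => hxy e.symm) hyG
        by_cases hA : x ∉ G ∧ insert x G ∈ Ξ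
        · rw [dif_pos hA, dif_pos (show x ∉ G ∧ insert x G ∈ del Ξ y from ⟨hA.1, hA.2, hyx⟩)]
          congr 1
          unfold extend
          rw [dif_pos hyx]
        · rw [dif_neg hA, dif_neg (fun hB => hA ⟨hB.1, hB.2.1⟩)]
  obtain ⟨w, hw⟩ := mem_boundaries_iff.mp (h0 hztc)
  have huc : coneDown Ξ y ((c : ℤ) - 1) w ∈ cycles k (link Ξ {y}) ((c : ℤ) - 1) := by
    rw [mem_cycles_iff]
    rintro ⟨G, hGlk, hGcard⟩
    have hmG : Disjoint G {y} ∧ G ∪ {y} ∈ Ξ := hGlk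
    have hyG : y ∉ G := Finset.disjoint_singleton_right.mp hmG.1
    have hins : insert y G ∈ Ξ := by
      have := hmG.2
      rwa [union_singleton_eq] at this
    have hcard2 : (((insert y G).card : ℤ)) = ((c : ℤ) - 1 + 1) - 1 + 1 := by
      rw [Finset.card_insert_of_notMem hyG]
      push_cast at hGcard ⊢
      omega
    have hbw : boundaryFun k Ξ ((c : ℤ) - 1 + 1) w ⟨insert y G, hins, hcard2⟩ = 0 := by
      have h1' := hw (insert y G) ⟨hins, by
        rw [Finset.card_insert_of_notMem hyG]; push_cast at hGcard ⊢; omega⟩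
      exact h1'.trans (by
        unfold extend
        exact dif_neg (not_not_intro (Finset.mem_insert_self y G)))
    have main : boundaryFun k (link Ξ {y}) ((c : ℤ) - 1) (coneDown Ξ y ((c : ℤ) - 1) w)
          ⟨G, hGlk, hGcard⟩
        = (-1 : k) ^ ((G.filter (fun s => s < y)).card + 1) *
            boundaryFun k Ξ ((c : ℤ) - 1 + 1) w ⟨insert y G, hins, hcard2⟩ := by
      unfold boundaryFun coneDown
      rw [Finset.mul_sum]
      refine Finset.sum_congr rfl fun x _ => ?_
      by_cases hxy : x = y
      · subst hxy
        rw [dif_neg, dif_neg, mul_zero]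
        · rintro ⟨hcon, -⟩
          exact hcon (Finset.mem_insert_self x G)
        · rintro ⟨-, hcon⟩
          have hc : Disjoint (insert x G) {x} ∧ (insert x G) ∪ {x} ∈ Ξ := hcon
          exact (Finset.disjoint_singleton_right.mp hc.1) (Finset.mem_insert_self x G)
      · have hyx : y ∉ insert x G :=
          fun hm => (Finset.mem_insert.mp hm).elim (fun e => hxy e.symm) hyG
        have eqA : insert x (insert y G) = insert y (insert x G) := Finset.insert_comm x y G
        by_cases hL : x ∉ G ∧ insert x G ∈ link Ξ {y}
        · have hmL : Disjoint (insert x G) {y} ∧ (insert x G) ∪ {y} ∈ Ξ := hL.2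
          have hR : x ∉ insert y G ∧ insert x (insert y G) ∈ Ξ := by
            refine ⟨fun hm => (Finset.mem_insert.mp hm).elim hxy hL.1, ?_⟩
            rw [eqA, ← union_singleton_eq]
            exact hmL.2
          rw [dif_pos hL, dif_pos hR]
          have ew : w ⟨insert y (insert x G), by
                have h2 := hmL.2
                rwa [union_singleton_eq] at h2, by
                rw [Finset.card_insert_of_notMem hyx,
                  Finset.card_insert_of_notMem hL.1]
                push_cast at hGcard ⊢
                omega⟩ =
              w ⟨insert x (insert y G), hR.2, by
                rw [Finset.card_insert_of_notMem hR.1,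
                  Finset.card_insert_of_notMem hyG]
                push_cast at hGcard ⊢
                omega⟩ :=
            congrArg w (Subtype.ext eqA.symm)
          rw [show ((insert x G).filter (fun s => s < y)).card
              = (G.filter (fun s => s < y)).card + (if x < y then 1 else 0) from
              filter_lt_insert_card hL.1 y,
            show ((insert y G).filter (fun s => s < x)).card
              = (G.filter (fun s => s < x)).card + (if y < x then 1 else 0) from
              filter_lt_insert_card hyG x]
          rw [ew]
          rcases lt_or_gt_of_ne hxy with hlt | hgt
          · rw [if_pos hlt, if_neg (asymm hlt)]
            simp only [pow_add, pow_succ, pow_zero, pow_one]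
            ring
          · rw [if_neg (asymm hgt), if_pos hgt]
            simp only [pow_add, pow_succ, pow_zero, pow_one]
            ring
        · rw [dif_neg hL, dif_neg, mul_zero]
          rintro ⟨h1, h2⟩
          refine hL ⟨fun hm => h1 (Finset.mem_insert_of_mem hm), ?_, ?_⟩
          · exact Finset.disjoint_singleton_right.mpr hyx
          · rw [union_singleton_eq, ← eqA]
            exact h2
    rw [main, hbw, mul_zero]
  obtain ⟨v, hv⟩ := mem_boundaries_iff.mp (h1 huc)
  refine mem_boundaries_iff.mpr ⟨corr Ξ y ((c : ℤ) - 1) w v, ?_⟩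
  intro G hG
  have hGdel : G ∈ Ξ ∧ y ∉ G := hG.1
  have hGΞ : G ∈ Ξ := hGdel.1
  have hyG : y ∉ G := hGdel.2
  have hGcard : (G.card : ℤ) = ((c : ℤ) - 1) + 1 := hG.2
  set yterm : k := if h : y ∉ G ∧ insert y G ∈ Ξ then
      (-1 : k) ^ ((G.filter (fun s => s < y)).card) * w ⟨insert y G, h.2, by
        rw [Finset.card_insert_of_notMem h.1]; push_cast at hGcard ⊢; omega⟩
    else 0 with hyterm
  set tA : Fin n → k := fun x => if h : x ∉ G ∧ insert x G ∈ del Ξ y then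
      (-1 : k) ^ ((G.filter (fun s => s < x)).card) *
        w ⟨insert x G, (show insert x G ∈ Ξ ∧ y ∉ insert x G from h.2).1, by
          rw [Finset.card_insert_of_notMem h.1]; push_cast at hGcard ⊢; omega⟩
    else 0 with htA
  set tB : Fin n → k := fun x => if h : x ∉ G ∧ insert x G ∈ link Ξ {y} then
      (-1 : k) ^ ((G.filter (fun s => s < x)).card) *
        v ⟨insert x G, h.2, by
          rw [Finset.card_insert_of_notMem h.1]; push_cast at hGcard ⊢; omega⟩
    else 0 with htB
  have step1 : boundaryFun k (del Ξ y) (((c : ℤ) - 1) + 1) (corr Ξ y ((c : ℤ) - 1) w v)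
      ⟨G, hG.1, by push_cast at hGcard ⊢; omega⟩ = ∑ x : Fin n, (tA x + tB x) := by
    unfold boundaryFun corr
    refine Finset.sum_congr rfl fun x _ => ?_
    rw [htA, htB]
    simp only
    by_cases hD : x ∉ G ∧ insert x G ∈ del Ξ y
    · rw [dif_pos hD, dif_pos hD]
      by_cases hlk : insert x G ∈ link Ξ {y}
      · rw [dif_pos hlk, dif_pos (show x ∉ G ∧ insert x G ∈ link Ξ {y} from ⟨hD.1, hlk⟩),
          mul_add]
      · rw [dif_neg hlk, dif_neg (fun hcon : x ∉ G ∧ insert x G ∈ link Ξ {y} => hlk hcon.2),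
          add_zero, add_zero]
    · have hnB : ¬(x ∉ G ∧ insert x G ∈ link Ξ {y}) := by
        rintro ⟨h1, h2⟩
        have hm : Disjoint (insert x G) {y} ∧ (insert x G) ∪ {y} ∈ Ξ := h2
        refine hD ⟨h1, hΞ _ hm.2 _ Finset.subset_union_left,
          Finset.disjoint_singleton_right.mp hm.1⟩
      rw [dif_neg hD, dif_neg hD, dif_neg hnB, add_zero]
  have hext : extend Ξ y ((c : ℤ) - 1) z ⟨G, hGΞ, hGcard⟩ = z ⟨G, hG⟩ := by
    unfold extend
    rw [dif_pos hyG]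
  have hbf : boundaryFun k Ξ (((c : ℤ) - 1) + 1) w
      ⟨G, hGΞ, by push_cast at hGcard ⊢; omega⟩ = z ⟨G, hG⟩ :=
    (hw G ⟨hGΞ, hGcard⟩).trans hext
  have step3 : ∑ x : Fin n, tA x = z ⟨G, hG⟩ - yterm := by
    have e1 : ∑ x : Fin n, tA x = ∑ x ∈ Finset.univ.erase y, tA x := by
      rw [← Finset.sum_erase_add Finset.univ tA (Finset.mem_univ y)]
      have hty : tA y = 0 := by
        rw [htA]
        exact dif_neg (fun hcon =>
          (show insert y G ∈ Ξ ∧ y ∉ insert y G from hcon.2).2 (Finset.mem_insert_self y G))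
      rw [hty, add_zero]
    have e2 : boundaryFun k Ξ (((c : ℤ) - 1) + 1) w
        ⟨G, hGΞ, by push_cast at hGcard ⊢; omega⟩ =
        (∑ x ∈ Finset.univ.erase y, tA x) + yterm := by
      unfold boundaryFun
      rw [← Finset.sum_erase_add Finset.univ _ (Finset.mem_univ y)]
      congr 1
      · refine Finset.sum_congr rfl fun x hx => ?_
        have hxy : x ≠ y := (Finset.mem_erase.mp hx).1
        rw [htA]
        simp only
        by_cases hC : x ∉ G ∧ insert x G ∈ Ξ
        · have hyx : y ∉ insert x G :=
            fun hm => (Finset.mem_insert.mp hm).elim (fun e => hxy e.symm) hyG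
          rw [dif_pos hC,
            dif_pos (show x ∉ G ∧ insert x G ∈ del Ξ y from ⟨hC.1, hC.2, hyx⟩)]
        · rw [dif_neg hC, dif_neg (fun hcon : x ∉ G ∧ insert x G ∈ del Ξ y =>
            hC ⟨hcon.1, (show insert x G ∈ Ξ ∧ y ∉ insert x G from hcon.2).1⟩)]
    rw [e1]
    exact eq_sub_of_add_eq (e2.symm.trans hbf)
  have step4 : ∑ x : Fin n, tB x = yterm := by
    by_cases hI : insert y G ∈ Ξ
    · have hGlk : G ∈ link Ξ {y} := ⟨Finset.disjoint_singleton_right.mpr hyG, by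
        rw [union_singleton_eq]; exact hI⟩
      have e3 : ∑ x : Fin n, tB x = boundaryFun k (link Ξ {y}) (((c : ℤ) - 1) + 1) v
          ⟨G, hGlk, by push_cast at hGcard ⊢; omega⟩ := by
        unfold boundaryFun
        refine Finset.sum_congr rfl fun x _ => ?_
        rw [htB]
      have e4 : boundaryFun k (link Ξ {y}) (((c : ℤ) - 1) + 1) v
          ⟨G, hGlk, by push_cast at hGcard ⊢; omega⟩ =
          coneDown Ξ y ((c : ℤ) - 1) w ⟨G, hGlk, hGcard⟩ :=
        hv G ⟨hGlk, hGcard⟩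
      have e5 : coneDown Ξ y ((c : ℤ) - 1) w ⟨G, hGlk, hGcard⟩ = yterm := by
        rw [hyterm, dif_pos (show y ∉ G ∧ insert y G ∈ Ξ from ⟨hyG, hI⟩)]
        unfold coneDown
        rfl
      rw [e3]
      exact e4.trans e5
    · have hyt0 : yterm = 0 := by
        rw [hyterm]
        exact dif_neg (fun hcon => hI hcon.2)
      rw [hyt0]
      refine Finset.sum_eq_zero fun x _ => ?_
      rw [htB]
      refine dif_neg fun hcon => hI ?_
      have hm : Disjoint (insert x G) {y} ∧ (insert x G) ∪ {y} ∈ Ξ := hcon.2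
      have hGy : G ∪ {y} ∈ Ξ :=
        hΞ _ hm.2 _ (Finset.union_subset_union_left (Finset.subset_insert x G))
      rwa [union_singleton_eq] at hGy
  exact step1.trans (by rw [Finset.sum_add_distrib, step3, step4]; ring)

lemma link_no_faces_of_mem {Γ : Set (Finset (Fin n))} {S : Finset (Fin n)} {y : Fin n}
    (hy : y ∈ S) : ∀ F, F ∉ link (link Γ {y}) S := by
  rintro F ⟨h1, h2⟩
  have hm : Disjoint (F ∪ S) {y} ∧ (F ∪ S) ∪ {y} ∈ Γ := h2
  exact (Finset.disjoint_singleton_right.mp hm.1) (Finset.mem_union_right F hy)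

lemma hv_link {Γ : Set (Finset (Fin n))} {c : ℕ} (h : HV k Γ c) (y : Fin n) :
    HV k (link Γ {y}) c := by
  intro S
  by_cases hy : y ∈ S
  · exact vanish_of_no_faces (link_no_faces_of_mem hy)
  · rw [link_link Γ (Finset.disjoint_singleton_right.mpr hy)]
    exact h _

lemma hv_del {Γ : Set (Finset (Fin n))} {c : ℕ} (hΓ : IsComplex Γ) (h : HV k Γ c) (y : Fin n) :
    HV k (del Γ y) c := by
  intro S
  by_cases hy : y ∈ S
  · refine vanish_of_no_faces ?_
    rintro F ⟨h1, h2⟩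
    exact (show F ∪ S ∈ Γ ∧ y ∉ F ∪ S from h2).2 (Finset.mem_union_right F hy)
  · rw [link_del hy]
    refine lemL1 (isComplex_link hΓ S) y (h S) ?_
    rw [link_link Γ (Finset.disjoint_singleton_left.mpr hy)]
    exact h _

/-- The main induction: a complex with hereditarily vanishing homology containing
the full `(c-1)`-skeleton on its vertex set `V` contains `V` itself. -/
lemma lemFULL {c : ℕ} (hc1 : 1 ≤ c) :
    ∀ m : ℕ, ∀ V : Finset (Fin n), V.card = m → ∀ Γ : Set (Finset (Fin n)),
      IsComplex Γ → (∀ F ∈ Γ, F ⊆ V) → (∀ F ⊆ V, F.card ≤ c → F ∈ Γ) →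
      HV k Γ c → V ∈ Γ := by
  intro m
  induction m using Nat.strong_induction_on with
  | _ m IH =>
    intro V hVm Γ hΓ hsupp hskel hHV
    by_cases hVc : V.card ≤ c
    · exact hskel V Finset.Subset.rfl hVc
    rcases eq_or_lt_of_le (show c + 1 ≤ V.card by omega) with heq | hlt
    · refine lemA (k := k) hc1 heq.symm (fun F hF hFc => hskel F hF hFc) hsupp ?_
      have := hHV ∅
      rwa [link_empty] at this
    · have hVne : V.Nonempty := by rw [← Finset.card_pos]; omega
      obtain ⟨y, hy⟩ := hVne
      have claim1 : ∀ y' ∈ V, V.erase y' ∈ Γ := by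
        intro y' hy'
        have hdel : V.erase y' ∈ del Γ y' := by
          refine IH (m - 1) (by omega) (V.erase y')
            (by rw [Finset.card_erase_of_mem hy']; omega)
            (del Γ y') (isComplex_del hΓ y') ?_ ?_ (hv_del hΓ hHV y')
          · rintro F ⟨hF1, hF2⟩
            exact Finset.subset_erase.mpr ⟨hsupp F hF1, hF2⟩
          · intro F hF hFc
            exact ⟨hskel F (hF.trans (Finset.erase_subset _ _)) hFc,
              fun hyF => (Finset.mem_erase.mp (hF hyF)).1 rfl⟩
        exact hdel.1
      have hlink : V.erase y ∈ link Γ {y} := by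
        refine IH (m - 1) (by omega) (V.erase y)
          (by rw [Finset.card_erase_of_mem hy]; omega)
          (link Γ {y}) (isComplex_link hΓ _) ?_ ?_ (hv_link hHV y)
        · rintro F ⟨hF1, hF2⟩
          refine Finset.subset_erase.mpr ⟨?_, Finset.disjoint_singleton_right.mp hF1⟩
          exact Finset.subset_union_left.trans (hsupp _ hF2)
        · intro F hF hFc
          have hFV : F ⊆ V := hF.trans (Finset.erase_subset _ _)
          have hyF : y ∉ F := fun hm => (Finset.mem_erase.mp (hF hm)).1 rfl
          refine ⟨Finset.disjoint_singleton_right.mpr hyF, ?_⟩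
          rw [union_singleton_eq]
          have hins : insert y F ⊆ V := Finset.insert_subset hy hFV
          have hcard : (insert y F).card ≤ c + 1 := by
            have := Finset.card_insert_le y F
            omega
          have hex : (V \ insert y F).Nonempty := by
            rw [← Finset.card_pos, Finset.card_sdiff_of_subset hins]
            have := Finset.card_le_card hins
            omega
          obtain ⟨y', hy'⟩ := hex
          rw [Finset.mem_sdiff] at hy'
          exact hΓ _ (claim1 y' hy'.1) _ (Finset.subset_erase.mpr ⟨hins, hy'.2⟩)
      have hfin : (V.erase y) ∪ {y} ∈ Γ :=
        (show Disjoint (V.erase y) {y} ∧ (V.erase y) ∪ {y} ∈ Γ from hlink).2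
      rwa [union_singleton_eq, Finset.insert_erase hy] at hfin

end Aux

/-- if `Δ` is 2-CLeray then every vertex link `lk_Δ{x}` has frame
parameter exactly `c - 1` (relative to the vertex set `[n] \ {x}`). -/
theorem stmt15 (k : Type) [Field k] {n : ℕ} (Δ : Set (Finset (Fin n)))
    (hΔ : IsComplex Δ) (c : ℕ) (hc1 : 1 ≤ c) (hc : IsFrame Δ c)
    (h2 : ∀ S : Finset (Fin n), 1 ≤ S.card →
      Subsingleton (ReducedHomology k (link Δ S) ((c : ℤ) - 1)))
    (x : Fin n) (hx : ({x} : Finset (Fin n)) ∈ Δ) :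
    (∀ F ⊆ ({x}ᶜ : Finset (Fin n)), F.card ≤ c - 1 → F ∈ link Δ {x}) ∧
    (∃ F, F ⊆ ({x}ᶜ : Finset (Fin n)) ∧ F.card = c ∧ F ∉ link Δ {x}) := by
  have part1 : ∀ F ⊆ ({x}ᶜ : Finset (Fin n)), F.card ≤ c - 1 → F ∈ link Δ {x} := by
    intro F hF hFc
    have hxF : x ∉ F := fun hm => by simpa using hF hm
    refine ⟨Finset.disjoint_singleton_right.mpr hxF, hc.1 _ ?_⟩
    have h1 := Finset.card_union_le F ({x} : Finset (Fin n))
    have h3 : ({x} : Finset (Fin n)).card = 1 := Finset.card_singleton x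
    omega
  refine ⟨part1, ?_⟩
  by_contra hcon
  push_neg at hcon
  have hskel : ∀ F ⊆ ({x}ᶜ : Finset (Fin n)), F.card ≤ c → F ∈ link Δ {x} := by
    intro F hF hFc
    rcases eq_or_lt_of_le hFc with heq | hltc
    · exact hcon F hF heq
    · exact part1 F hF (by omega)
  have hsupp : ∀ F ∈ link Δ {x}, F ⊆ ({x}ᶜ : Finset (Fin n)) := by
    rintro F ⟨h1, h2⟩ a ha
    rw [Finset.mem_compl]
    exact fun hax => (Finset.disjoint_left.mp h1 ha) hax
  have hHV : HV k (link Δ {x}) c := by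
    intro S
    by_cases hxS : x ∈ S
    · exact vanish_of_no_faces (link_no_faces_of_mem hxS)
    · rw [link_link Δ (Finset.disjoint_singleton_right.mpr hxS)]
      refine vanish_of_subsingleton (h2 _ ?_)
      exact Finset.card_pos.mpr ⟨x, Finset.mem_union_left S (Finset.mem_singleton_self x)⟩
  have hfin : ({x}ᶜ : Finset (Fin n)) ∈ link Δ {x} :=
    lemFULL (k := k) hc1 ({x}ᶜ : Finset (Fin n)).card _ rfl _
      (isComplex_link hΔ {x}) hsupp hskel hHV
  have huniv : (Finset.univ : Finset (Fin n)) ∈ Δ := by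
    have hm : Disjoint (({x}ᶜ : Finset (Fin n))) {x} ∧
        (({x}ᶜ : Finset (Fin n)) ∪ {x}) ∈ Δ := hfin
    have he : (({x}ᶜ : Finset (Fin n)) ∪ {x}) = Finset.univ := by
      rw [Finset.union_comm, Finset.union_compl]
    have h2'' := hm.2
    rwa [he] at h2''
  obtain ⟨F, hF1, hF2⟩ := hc.2
  exact hF2 (hΔ _ huniv F (Finset.subset_univ F))

end SCx
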